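/- Let G be a simple undirected graph on vertices {1,...,p} such that for each i = 2,...,p, adj(i) ∩ {1,...,i-1} ⊆ (adj(i-1) ∩ {1,...,i-2}) ∪ {i-1}, where adj(v) denotes the set of neighbours of v in G. Then G is decomposable (chordal): every cycle in G of length at least 4 has a chord. -/

import Mathlib

section Aux

variable {p : ℕ} {G : SimpleGraph ℕ}

/-- Closure lemma: a lower neighbour of `i` is adjacent to everything between. -/
lemma closure_aux
    (hvert : ∀ i j : ℕ, G.Adj i j → i ∈ Finset.Icc 1 p ∧ j ∈ Finset.Icc 1 p)
    (hrun : ∀ i, 2 ≤ i → i ≤ p → ∀ j, G.Adj i j → j < i →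
      (j = i - 1 ∨ (G.Adj (i - 1) j ∧ j < i - 1))) :
    ∀ i j, G.Adj i j → j < i → ∀ k, j < k → k ≤ i → G.Adj k j := by
  intro i
  induction i using Nat.strong_induction_on with
  | _ i IH =>
    intro j hij hji k hjk hki
    rcases eq_or_lt_of_le hki with rfl | hk
    · exact hij
    · obtain ⟨hi, hj⟩ := hvert i j hij
      simp only [Finset.mem_Icc] at hi hj
      have h2 : 2 ≤ i := by omega
      rcases hrun i h2 hi.2 j hij hji with h | ⟨hadj, hlt⟩
      · omega
      · exact IH (i-1) (by omega) j hadj hlt k hjk (by omega)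

/-- An edge joining the endpoints of a path forces length 1. -/
lemma path_edge_ends {a b : ℕ} (P : G.Walk a b) (hP : P.IsPath)
    (he : s(a, b) ∈ P.edges) : P.length = 1 := by
  induction P with
  | nil => simp at he
  | @cons u x w h P' IH =>
    rw [SimpleGraph.Walk.edges_cons, List.mem_cons] at he
    rcases he with he | he
    · rw [Sym2.eq_iff] at he
      rcases he with ⟨-, rfl⟩ | ⟨h1, -⟩
      · have hP' := ((SimpleGraph.Walk.cons_isPath_iff h P').mp hP).1
        rw [SimpleGraph.Walk.isPath_iff_eq_nil] at hP'
        rw [hP']; simp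
      · exact absurd h1 h.ne
    · have := P'.fst_mem_support_of_mem_edges he
      exact absurd this ((SimpleGraph.Walk.cons_isPath_iff h P').mp hP).2

end Aux

/-- **Statement 15.** Let `G` be a simple undirected graph on the vertices `{1, …, p}`
(formalized as a graph on `ℕ` all of whose edges join vertices in `{1, …, p}`) such that
for each `i = 2, …, p`,
`adj(i) ∩ {1, …, i-1} ⊆ (adj(i-1) ∩ {1, …, i-2}) ∪ {i-1}`.
Then `G` is decomposable (chordal): every cycle of length at least 4 has a chord, i.e.
an edge of `G` joining two vertices of the cycle that are not consecutive on the cycle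
(equivalently, an edge between vertices of the cycle that is not an edge of the cycle). -/
theorem running_adjacency_implies_chordal
    (p : ℕ) (G : SimpleGraph ℕ)
    (hvert : ∀ i j : ℕ, G.Adj i j → i ∈ Finset.Icc 1 p ∧ j ∈ Finset.Icc 1 p)
    (hrun : ∀ i, 2 ≤ i → i ≤ p → ∀ j, G.Adj i j → j < i →
      (j = i - 1 ∨ (G.Adj (i - 1) j ∧ j < i - 1))) :
    ∀ (v : ℕ) (c : G.Walk v v), c.IsCycle → 4 ≤ c.length →
      ∃ x y : ℕ, G.Adj x y ∧ x ∈ c.support ∧ y ∈ c.support ∧ s(x, y) ∉ c.edges := by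
  intro v c hc hlen
  classical
  -- maximum vertex of the cycle
  set s : Finset ℕ := c.support.toFinset with hs
  have hsne : s.Nonempty := ⟨v, by simp [hs]⟩
  set m : ℕ := s.max' hsne with hm
  have hmmem : m ∈ c.support := by
    have := s.max'_mem hsne; simpa [hs] using this
  have hle : ∀ x ∈ c.support, x ≤ m := by
    intro x hx; exact s.le_max' x (by simp [hs, hx])
  -- rotate
  set c' := c.rotate m hmmem with hc'
  have hc'cyc : c'.IsCycle := hc.rotate hmmem
  have hedgesrot : c'.edges ~r c.edges := c.rotate_edges m hmmem
  have hsuprot : c'.support.tail ~r c.support.tail := c.support_rotate m hmmem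
  have hlen' : 4 ≤ c'.length := by
    have := hedgesrot.perm.length_eq
    rw [SimpleGraph.Walk.length_edges, SimpleGraph.Walk.length_edges] at this
    omega
  -- decompose c' = cons h1 q
  have hnn : ¬ c'.Nil := by
    rw [SimpleGraph.Walk.not_nil_iff_lt_length]; omega
  obtain ⟨a, h1, q, hq⟩ := SimpleGraph.Walk.not_nil_iff.mp hnn
  -- decompose q.reverse = cons h2 r
  have hqnn : ¬ q.reverse.Nil := by
    rw [SimpleGraph.Walk.not_nil_iff_lt_length, SimpleGraph.Walk.length_reverse]
    have : c'.length = q.length + 1 := by rw [hq]; simp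
    omega
  obtain ⟨b, h2, r, hr⟩ := SimpleGraph.Walk.not_nil_iff.mp hqnn
  set P := r.reverse with hP
  have hqP : q = P.append (SimpleGraph.Walk.cons h2.symm SimpleGraph.Walk.nil) := by
    have : q = q.reverse.reverse := (q.reverse_reverse).symm
    rw [this, hr, SimpleGraph.Walk.reverse_cons]
  have hlenq : c'.length = q.length + 1 := by rw [hq]; simp
  have hlenP : q.length = P.length + 1 := by
    rw [hqP]; simp
  -- q is a path
  have hqpath : q.IsPath ∧ s(m, a) ∉ q.edges := by
    have := hc'cyc
    rw [hq, SimpleGraph.Walk.cons_isCycle_iff] at this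
    exact this
  have hPpath : P.IsPath := hqP ▸ hqpath.1 |>.of_append_left
  -- a ≠ b
  have hab : a ≠ b := by
    intro h
    subst h
    have : P.length = 0 := by
      have := (SimpleGraph.Walk.isPath_iff_eq_nil (p := P)).mp hPpath
      rw [this]; simp
    omega
  have ham : a ≠ m := h1.ne'
  have hbm : b ≠ m := h2.ne'
  -- membership of a and b in c.support
  have haq : a ∈ q.support := q.start_mem_support
  have hbq : b ∈ q.support := by
    rw [hqP, SimpleGraph.Walk.mem_support_append_iff]
    exact Or.inl P.end_mem_support
  have hsupq : c'.support.tail = q.support := by rw [hq]; simp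
  have hamem : a ∈ c.support := by
    have : a ∈ c.support.tail := hsuprot.mem_iff.mp (hsupq ▸ haq)
    exact List.mem_of_mem_tail this
  have hbmem : b ∈ c.support := by
    have : b ∈ c.support.tail := hsuprot.mem_iff.mp (hsupq ▸ hbq)
    exact List.mem_of_mem_tail this
  have halt : a < m := lt_of_le_of_ne (hle a hamem) ham
  have hblt : b < m := lt_of_le_of_ne (hle b hbmem) hbm
  -- the chord is not an edge of the cycle
  have hchordne : s(a, b) ∉ c'.edges := by
    rw [hq, SimpleGraph.Walk.edges_cons, hqP, SimpleGraph.Walk.edges_append]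
    simp only [List.mem_cons, List.mem_append]
    rintro (h | h | h)
    · rw [Sym2.eq_iff] at h
      rcases h with ⟨h, -⟩ | ⟨-, h⟩ <;> omega
    · have := path_edge_ends P hPpath h
      omega
    · simp only [SimpleGraph.Walk.edges_cons, SimpleGraph.Walk.edges_nil,
        List.mem_singleton] at h
      rw [Sym2.eq_iff] at h
      rcases h with ⟨h, h'⟩ | ⟨h, h'⟩ <;> omega
  have hchordc : s(a, b) ∉ c.edges := fun h => hchordne (hedgesrot.mem_iff.mpr h)
  -- adjacency via the closure lemma
  rcases lt_or_gt_of_ne hab with h | h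
  · have hadj : G.Adj b a :=
      closure_aux hvert hrun m a h1 halt b h (le_of_lt hblt)
    exact ⟨a, b, hadj.symm, hamem, hbmem, hchordc⟩
  · have hadj : G.Adj a b :=
      closure_aux hvert hrun m b h2 hblt a h (le_of_lt halt)
    exact ⟨a, b, hadj, hamem, hbmem, hchordc⟩
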